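/- Let q be a power of an odd prime with q ≥ 5, let m ≥ 2 be an integer that does not divide q−1 and such that every prime factor of m divides q−1 and, if 4 divides m, then 4 divides q−1. Let l = ord_m(q), assume l divides m and set k = m/l and t = (q^l − 1)/m. Let a ∈ F_q have multiplicative order e = ∏_{p prime, p ∣ m} p^{v_p(q−1)}, assume x^m − a is irreducible over F_q, and let θ be the image of x in F_{q^m} = F_q[x]/(x^m − a). Then for every non-zero b ∈ F_q there exist integers r_0, r_1, …, r_{l−1} such that the k·l elements a^{jt + r_i} θ^{ik+1} + b, for 0 ≤ i ≤ l−1 and 0 ≤ j ≤ k−1, are pairwise distinct and all belong to the cyclic subgroup of F_{q^m}^* generated by θ + b. -/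

import Mathlib

private lemma geom_sum_nat (q : ℕ) (hq : 1 ≤ q) :
    ∀ n : ℕ, (q - 1) * ∑ i ∈ Finset.range n, q ^ i = q ^ n - 1 := by
  intro n
  induction n with
  | zero => simp
  | succ n ih =>
    rw [Finset.sum_range_succ, Nat.mul_add, ih]
    have h1 : 1 ≤ q ^ n := Nat.one_le_pow _ _ hq
    have h2 : q ^ n ≤ q ^ (n+1) := Nat.pow_le_pow_right hq (by omega)
    have h3 : (q - 1) * q ^ n = q ^ (n+1) - q ^ n := by
      rw [Nat.sub_mul, one_mul, ← pow_succ']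
    omega

private lemma cast_pow_eq_one (p q : ℕ) (hq : 1 ≤ q) (h : p ∣ q - 1) : ((q : ZMod p) = 1) := by
  have : 1 ≡ q [MOD p] := (Nat.modEq_iff_dvd' hq).mpr h
  have := (ZMod.natCast_eq_natCast_iff 1 q p).mpr this
  simpa using this.symm

private lemma dvd_geom_sum (p q n : ℕ) (hq : 1 ≤ q) (h : p ∣ q - 1) :
    p ∣ ∑ i ∈ Finset.range p, (q ^ n) ^ i := by
  have hq1 : (q : ZMod p) = 1 := cast_pow_eq_one p q hq h
  have : ((∑ i ∈ Finset.range p, (q ^ n) ^ i : ℕ) : ZMod p) = 0 := by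
    push_cast
    rw [hq1]
    simp
  exact (ZMod.natCast_eq_zero_iff _ _).mp this

private lemma lte_lower (p q : ℕ) (hp : p.Prime) (hq : 2 ≤ q) (hd : p ∣ q - 1) :
    ∀ n : ℕ, n ≠ 0 →
      (q - 1).factorization p + n.factorization p ≤ (q ^ n - 1).factorization p := by
  intro n
  induction n using Nat.strong_induction_on with
  | _ n ih =>
    intro hn
    have hq1 : q - 1 ≠ 0 := by omega
    have hqn1 : q ^ n - 1 ≠ 0 := by
      have : 2 ^ n ≤ q ^ n := Nat.pow_le_pow_left hq n
      have : 1 < 2 ^ n := Nat.one_lt_two_pow hn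
      omega
    by_cases hpn : p ∣ n
    · -- n = n' * p
      obtain ⟨n', rfl⟩ : ∃ n', n = n' * p := ⟨n / p, by rw [Nat.div_mul_cancel hpn]⟩
      have hn' : n' ≠ 0 := by rintro rfl; simp at hn
      have hlt : n' < n' * p := by
        have h2 := hp.two_le
        exact (Nat.lt_mul_iff_one_lt_right (by omega)).mpr (by omega)
      have hQ : 1 ≤ q ^ n' := Nat.one_le_pow _ _ (by omega)
      have hQ1 : q ^ n' - 1 ≠ 0 := by
        have : 2 ^ n' ≤ q ^ n' := Nat.pow_le_pow_left hq n'
        have : 1 < 2 ^ n' := Nat.one_lt_two_pow hn'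
        omega
      have key : q ^ (n' * p) - 1 = (q ^ n' - 1) * ∑ i ∈ Finset.range p, (q ^ n') ^ i := by
        rw [geom_sum_nat (q ^ n') hQ p, ← pow_mul]
      have hdvdS : p ∣ ∑ i ∈ Finset.range p, (q ^ n') ^ i :=
        dvd_geom_sum p q n' (by omega) hd
      have hS0 : (∑ i ∈ Finset.range p, (q ^ n') ^ i) ≠ 0 := by
        rintro h0
        rw [key, h0, mul_zero] at hqn1; exact hqn1 rfl
      have hfact : (q ^ (n' * p) - 1).factorization p
          = (q ^ n' - 1).factorization p + (∑ i ∈ Finset.range p, (q ^ n') ^ i).factorization p := by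
        rw [key, Nat.factorization_mul hQ1 hS0]; simp
      have h1 : 1 ≤ (∑ i ∈ Finset.range p, (q ^ n') ^ i).factorization p :=
        (Nat.Prime.factorization_pos_of_dvd hp hS0 hdvdS)
      have hvn : (n' * p).factorization p = n'.factorization p + 1 := by
        rw [Nat.factorization_mul hn' hp.ne_zero]
        simp [Nat.Prime.factorization_self hp]
      have := ih n' hlt hn'
      omega
    · have hv0 : n.factorization p = 0 := Nat.factorization_eq_zero_of_not_dvd hpn
      have hdvd : q - 1 ∣ q ^ n - 1 := by
        have := Nat.sub_dvd_pow_sub_pow q 1 n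
        simpa using this
      have := (Nat.factorization_le_iff_dvd hq1 hqn1).mpr hdvd
      have := this p
      omega

private lemma sum_odd (q n : ℕ) (hd : 2 ∣ q - 1) (hq : 2 ≤ q) (hn : Odd n) :
    ¬ 2 ∣ ∑ i ∈ Finset.range n, q ^ i := by
  intro h
  have hq1 : (q : ZMod 2) = 1 := cast_pow_eq_one 2 q (by omega) hd
  have h0 : ((∑ i ∈ Finset.range n, q ^ i : ℕ) : ZMod 2) = 0 :=
    (ZMod.natCast_eq_zero_iff _ _).mpr h
  rw [Nat.cast_sum] at h0
  simp only [Nat.cast_pow, hq1, one_pow, Finset.sum_const, Finset.card_range, nsmul_eq_mul,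
    mul_one] at h0
  have : (n : ZMod 2) = 1 := by
    have : n % 2 = 1 := Nat.odd_iff.mp hn
    have := (ZMod.natCast_eq_natCast_iff n 1 2).mpr (by unfold Nat.ModEq; simpa using this)
    simpa using this
  rw [this] at h0
  exact one_ne_zero h0

private lemma v2_odd_exp (q n : ℕ) (hq : 2 ≤ q) (hd : 2 ∣ q - 1) (hn : Odd n) :
    (q ^ n - 1).factorization 2 = (q - 1).factorization 2 := by
  have hq1 : q - 1 ≠ 0 := by omega
  have key : q ^ n - 1 = (q - 1) * ∑ i ∈ Finset.range n, q ^ i :=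
    (geom_sum_nat q (by omega) n).symm
  have hS : ¬ 2 ∣ ∑ i ∈ Finset.range n, q ^ i := sum_odd q n hd hq hn
  have hS0 : (∑ i ∈ Finset.range n, q ^ i) ≠ 0 := by rintro h0; rw [h0] at hS; exact hS ⟨0, rfl⟩
  rw [key, Nat.factorization_mul hq1 hS0]
  simp [Nat.factorization_eq_zero_of_not_dvd hS]

private lemma lte_exact (p q n : ℕ) (hp : p.Prime) (hq : 2 ≤ q) (hd : p ∣ q - 1)
    (hn : n ≠ 0) (hside : Odd p ∨ 4 ∣ q - 1 ∨ Odd n) :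
    (q ^ n - 1).factorization p = (q - 1).factorization p + n.factorization p := by
  haveI : Fact p.Prime := ⟨hp⟩
  have hq1 : q - 1 ≠ 0 := by omega
  have hqn1 : q ^ n - 1 ≠ 0 := by
    have h1 : 2 ^ n ≤ q ^ n := Nat.pow_le_pow_left hq n
    have h2 : 1 < 2 ^ n := Nat.one_lt_two_pow hn
    omega
  have hpq : ¬ p ∣ q := by
    intro h
    have h1 : p ∣ q - (q - 1) := Nat.dvd_sub h hd
    have h2 : q - (q - 1) = 1 := by omega
    rw [h2] at h1
    have := Nat.dvd_one.mp h1
    have := hp.two_le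
    omega
  rcases hp.eq_two_or_odd' with hp2 | hop
  · subst hp2
    rcases Nat.even_or_odd n with hne | hno
    · have h4 : 4 ∣ q - 1 := by
        rcases hside with h | h | h
        · exact absurd h (by decide)
        · exact h
        · exact absurd h (Nat.not_odd_iff_even.mpr hne)
      have key := padicValNat.pow_two_sub_pow (x := q) (y := 1) (by omega)
        (by simpa using hd) (by simpa using hpq) hn hne
      simp only [one_pow] at key
      have hv1 : padicValNat 2 (q + 1) = 1 := by
        have hf : (q + 1).factorization 2 = 1 := by
          have hd2 : 2 ∣ q + 1 := by obtain ⟨c, hc⟩ := h4; omega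
          have h1 : 1 ≤ (q + 1).factorization 2 :=
            Nat.Prime.factorization_pos_of_dvd Nat.prime_two (by omega) hd2
          have hnd4 : ¬ (4 ∣ q + 1) := by obtain ⟨c, hc⟩ := h4; omega
          have h2 : ¬ (2 ≤ (q + 1).factorization 2) := by
            intro h2
            exact hnd4 (by
              have := (Nat.Prime.pow_dvd_iff_le_factorization Nat.prime_two
                (n := q + 1) (k := 2) (by omega)).mpr h2
              simpa using this)
          omega
        rw [← Nat.factorization_def _ Nat.prime_two]
        exact hf
      rw [hv1] at key
      rw [Nat.factorization_def _ Nat.prime_two, Nat.factorization_def _ Nat.prime_two,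
        Nat.factorization_def _ Nat.prime_two]
      omega
    · have hn2 : ¬ 2 ∣ n := by
        obtain ⟨c, hc⟩ := hno
        rintro ⟨d, hd2⟩
        omega
      rw [v2_odd_exp q n hq hd hno, Nat.factorization_eq_zero_of_not_dvd hn2]
      omega
  · have key := padicValNat.pow_sub_pow (x := q) (y := 1) hop (by omega)
      (by simpa using hd) (by simpa using hpq) hn
    simp only [one_pow] at key
    rw [Nat.factorization_def _ hp, Nat.factorization_def _ hp, Nat.factorization_def _ hp]
    exact key

private lemma factorization_prod_pow (m : ℕ) (hm : m ≠ 0) (g : ℕ → ℕ) :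
    ∀ p : ℕ, p.Prime →
      (∏ r ∈ m.primeFactors, r ^ g r).factorization p = if p ∣ m then g p else 0 := by
  intro p hp
  have hne : ∀ r ∈ m.primeFactors, r ^ g r ≠ 0 := fun r hr =>
    pow_ne_zero _ (Nat.prime_of_mem_primeFactors hr).ne_zero
  rw [Nat.factorization_prod hne]
  have heval : ∀ r ∈ m.primeFactors,
      (r ^ g r).factorization p = if r = p then g r else 0 := by
    intro r hr
    rw [Nat.Prime.factorization_pow (Nat.prime_of_mem_primeFactors hr)]
    exact Finsupp.single_apply
  rw [Finset.sum_apply']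
  rw [Finset.sum_congr rfl heval, Finset.sum_ite_eq' m.primeFactors p g]
  by_cases hpm : p ∣ m
  · rw [if_pos (Nat.mem_primeFactors.mpr ⟨hp, hpm, hm⟩), if_pos hpm]
  · rw [if_neg (fun hmem => hpm (Nat.mem_primeFactors.mp hmem).2.1), if_neg hpm]

private lemma prod_pow_ne_zero (m : ℕ) (g : ℕ → ℕ) :
    (∏ r ∈ m.primeFactors, r ^ g r) ≠ 0 :=
  Finset.prod_ne_zero_iff.mpr fun r hr =>
    pow_ne_zero _ (Nat.prime_of_mem_primeFactors hr).ne_zero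

private lemma nt_all (q m l : ℕ) (hq5 : 5 ≤ q) (hm2 : 2 ≤ m)
    (hprime : ∀ p : ℕ, p.Prime → p ∣ m → p ∣ (q - 1))
    (h4 : 4 ∣ m → 4 ∣ (q - 1))
    (hl : l = orderOf ((q : ZMod m)))
    (hldvd : l ∣ m) :
    Nat.Coprime q m ∧
    0 < l ∧ m ∣ q ^ l - 1 ∧ (m / l) ∣ (q - 1) ∧ 2 ≤ m / l ∧
    (∏ p ∈ m.primeFactors, p ^ (q - 1).factorization p) ∣ (q - 1) ∧
    (q ^ l - 1) / m ≠ 0 ∧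
    (∏ p ∈ m.primeFactors, p ^ (q - 1).factorization p) /
      Nat.gcd (∏ p ∈ m.primeFactors, p ^ (q - 1).factorization p) ((q ^ l - 1) / m)
      = m / l := by
  have hm0 : m ≠ 0 := by omega
  have hq1 : q - 1 ≠ 0 := by omega
  -- coprimality
  have hcop : Nat.Coprime q m := by
    rw [Nat.coprime_iff_gcd_eq_one]
    by_contra hg
    have hgpos : 0 < Nat.gcd q m := Nat.gcd_pos_of_pos_right q (by omega)
    obtain ⟨p, hp, hpg⟩ := Nat.exists_prime_and_dvd (fun h1 => hg h1)
    have hpq : p ∣ q := hpg.trans (Nat.gcd_dvd_left q m)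
    have hpm : p ∣ m := hpg.trans (Nat.gcd_dvd_right q m)
    have hpq1 : p ∣ q - 1 := hprime p hp hpm
    have : p ∣ q - (q - 1) := Nat.dvd_sub hpq hpq1
    have h2 : q - (q - 1) = 1 := by omega
    rw [h2] at this
    have := Nat.dvd_one.mp this
    have := hp.two_le
    omega
  haveI : NeZero m := ⟨hm0⟩
  -- positivity of l
  have hl0 : 0 < l := by
    have h1 : ((ZMod.unitOfCoprime q hcop : (ZMod m)ˣ) : ZMod m) = (q : ZMod m) :=
      ZMod.coe_unitOfCoprime q hcop
    have h2 : orderOf ((q : ZMod m)) = orderOf (ZMod.unitOfCoprime q hcop) := by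
      rw [← h1, orderOf_units]
    rw [hl, h2]
    exact orderOf_pos _
  have hqn_pos : ∀ n : ℕ, 1 ≤ q ^ n := fun n => Nat.one_le_pow _ _ (by omega)
  have hdvd_iff : ∀ n : ℕ, m ∣ q ^ n - 1 ↔ (q : ZMod m) ^ n = 1 := by
    intro n
    rw [← ZMod.natCast_eq_zero_iff, Nat.cast_sub (hqn_pos n)]
    push_cast
    rw [sub_eq_zero, eq_comm]
  have hC2 : m ∣ q ^ l - 1 := (hdvd_iff l).mpr (by rw [hl]; exact pow_orderOf_eq_one _)
  have hqlm1 : q ^ l - 1 ≠ 0 := by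
    have := Nat.one_lt_pow (by omega : l ≠ 0) (by omega : 1 < q)
    omega
  have horddvd : ∀ n : ℕ, m ∣ q ^ n - 1 → l ∣ n := fun n hn => by
    rw [hl]; exact orderOf_dvd_of_pow_eq_one ((hdvd_iff n).mp hn)
  have hvq1 : ∀ p : ℕ, p.Prime → p ∣ m → 1 ≤ (q - 1).factorization p := fun p hp hpm =>
    Nat.Prime.factorization_pos_of_dvd hp hq1 (hprime p hp hpm)
  have hvm1 : ∀ p : ℕ, p.Prime → p ∣ m → 1 ≤ m.factorization p := fun p hp hpm =>
    Nat.Prime.factorization_pos_of_dvd hp hm0 hpm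
  have hvm_le : ¬ 4 ∣ m → m.factorization 2 ≤ 1 := by
    intro h4m
    by_contra hc
    refine h4m ?_
    have := (Nat.Prime.pow_dvd_iff_le_factorization Nat.prime_two hm0).mpr
      (by omega : 2 ≤ m.factorization 2)
    simpa using this
  have hD1 : ∀ p : ℕ, p.Prime → p ∣ m →
      m.factorization p ≤ (q - 1).factorization p + l.factorization p := by
    intro p hp hpm
    by_cases hside : Odd p ∨ 4 ∣ q - 1
    · have hle := Finsupp.le_def.mp ((Nat.factorization_le_iff_dvd hm0 hqlm1).mpr hC2) p
      rw [lte_exact p q l hp (by omega) (hprime p hp hpm) (by omega) (by tauto)] at hle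
      exact hle
    · push_neg at hside
      obtain ⟨hpodd, h4q⟩ := hside
      have hp2 : p = 2 := by
        rcases hp.eq_two_or_odd' with h | h
        · exact h
        · exact absurd h hpodd
      subst hp2
      have hvm : m.factorization 2 ≤ 1 := hvm_le (fun h => h4q (h4 h))
      have := hvq1 2 Nat.prime_two hpm
      omega
  have hlodd : ¬ 4 ∣ q - 1 → Odd l := by
    intro h4q
    have hl'pos : 0 < ordCompl[2] l := Nat.ordCompl_pos 2 (by omega)
    have hqn1 : q ^ (ordCompl[2] l) - 1 ≠ 0 := by
      have := Nat.one_lt_pow hl'pos.ne' (by omega : 1 < q)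
      omega
    have hmdvd : m ∣ q ^ (ordCompl[2] l) - 1 := by
      rw [← Nat.factorization_le_iff_dvd hm0 hqn1]
      rw [Finsupp.le_def]
      intro p
      by_cases hp : p.Prime
      · by_cases hpm : p ∣ m
        · rcases hp.eq_two_or_odd' with hp2 | hodd
          · subst hp2
            have hvm : m.factorization 2 ≤ 1 := hvm_le (fun h => h4q (h4 h))
            have h2d : (2:ℕ) ∣ q ^ (ordCompl[2] l) - 1 := by
              have hd1 : q - 1 ∣ q ^ (ordCompl[2] l) - 1 := by
                have := Nat.sub_dvd_pow_sub_pow q 1 (ordCompl[2] l)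
                simpa using this
              exact (hprime 2 Nat.prime_two hpm).trans hd1
            have := Nat.Prime.factorization_pos_of_dvd Nat.prime_two hqn1 h2d
            omega
          · rw [lte_exact p q _ hp (by omega) (hprime p hp hpm) hl'pos.ne' (Or.inl hodd)]
            have hd := hD1 p hp hpm
            have herase : (ordCompl[2] l).factorization p = l.factorization p := by
              rw [Nat.factorization_ordCompl]
              exact Finsupp.erase_ne (fun hpe => by
                rw [hpe] at hodd
                exact (by decide : ¬ Odd 2) hodd)
            omega
        · rw [Nat.factorization_eq_zero_of_not_dvd hpm]
          omega
      · rw [Nat.factorization_eq_zero_of_not_prime _ hp]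
        omega
    have h1 : l ∣ ordCompl[2] l := horddvd _ hmdvd
    have h2 : ordCompl[2] l ∣ l := Nat.ordCompl_dvd l 2
    have heq : l = ordCompl[2] l := Nat.dvd_antisymm h1 h2
    have hnd : ¬ 2 ∣ ordCompl[2] l := Nat.not_dvd_ordCompl Nat.prime_two (by omega)
    rw [← heq] at hnd
    exact Nat.odd_iff.mpr (by omega)
  have hexact : ∀ p : ℕ, p.Prime → p ∣ m →
      (q ^ l - 1).factorization p = (q - 1).factorization p + l.factorization p := by
    intro p hp hpm
    refine lte_exact p q l hp (by omega) (hprime p hp hpm) (by omega) ?_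
    rcases hp.eq_two_or_odd' with hp2 | hodd
    · by_cases h4q : 4 ∣ q - 1
      · exact Or.inr (Or.inl h4q)
      · exact Or.inr (Or.inr (hlodd h4q))
    · exact Or.inl hodd
  have hG2 : ∀ p : ℕ, p.Prime → p ∣ m →
      l.factorization p ≤ m.factorization p - (q - 1).factorization p := by
    intro p hp hpm
    have hl0ne : (∏ r ∈ m.primeFactors,
        r ^ (m.factorization r - (q - 1).factorization r)) ≠ 0 := prod_pow_ne_zero m _
    have hqn1 : q ^ (∏ r ∈ m.primeFactors,
        r ^ (m.factorization r - (q - 1).factorization r)) - 1 ≠ 0 := by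
      have := Nat.one_lt_pow hl0ne (by omega : 1 < q)
      omega
    have hmdvd : m ∣ q ^ (∏ r ∈ m.primeFactors,
        r ^ (m.factorization r - (q - 1).factorization r)) - 1 := by
      rw [← Nat.factorization_le_iff_dvd hm0 hqn1]
      rw [Finsupp.le_def]
      intro r
      by_cases hr : r.Prime
      · by_cases hrm : r ∣ m
        · have hlow := lte_lower r q hr (by omega) (hprime r hr hrm) _ hl0ne
          have hfp := factorization_prod_pow m hm0
            (fun r => m.factorization r - (q - 1).factorization r) r hr
          rw [hfp, if_pos hrm] at hlow
          omega
        · rw [Nat.factorization_eq_zero_of_not_dvd hrm]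
          omega
      · rw [Nat.factorization_eq_zero_of_not_prime _ hr]
        omega
    have hdl0 := horddvd _ hmdvd
    have hle := Finsupp.le_def.mp ((Nat.factorization_le_iff_dvd (by omega) hl0ne).mpr hdl0) p
    have hfp := factorization_prod_pow m hm0
      (fun r => m.factorization r - (q - 1).factorization r) p hp
    rw [hfp, if_pos hpm] at hle
    exact hle
  have hkl : m / l * l = m := Nat.div_mul_cancel hldvd
  have hk0 : m / l ≠ 0 := by
    intro h
    rw [h] at hkl
    omega
  have hkf : ∀ p, (m / l).factorization p
      = m.factorization p - l.factorization p := by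
    intro p
    rw [Nat.factorization_div hldvd]
    simp
  have hkm : m / l ∣ m := Nat.div_dvd_of_dvd hldvd
  have hkdvd : m / l ∣ q - 1 := by
    rw [← Nat.factorization_le_iff_dvd hk0 hq1]
    rw [Finsupp.le_def]
    intro p
    by_cases hp : p.Prime
    · by_cases hpk : p ∣ m / l
      · have hpm : p ∣ m := hpk.trans hkm
        have := hD1 p hp hpm
        rw [hkf p]
        omega
      · rw [Nat.factorization_eq_zero_of_not_dvd hpk]
        omega
    · rw [Nat.factorization_eq_zero_of_not_prime _ hp]
      omega
  have hk2 : 2 ≤ m / l := by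
    obtain ⟨p, hp, hpm⟩ := Nat.exists_prime_and_dvd (by omega : m ≠ 1)
    have hpk : p ∣ m / l := by
      refine Nat.dvd_of_factorization_pos (n := m / l) (p := p) ?_
      have h1 := hvq1 p hp hpm
      have h2 := hvm1 p hp hpm
      have h3 := hG2 p hp hpm
      rw [hkf p]
      omega
    have := hp.two_le
    exact le_trans this (Nat.le_of_dvd (Nat.pos_of_ne_zero hk0) hpk)
  have he0 : (∏ p ∈ m.primeFactors, p ^ (q - 1).factorization p) ≠ 0 := prod_pow_ne_zero m _
  have hedvd : (∏ p ∈ m.primeFactors, p ^ (q - 1).factorization p) ∣ q - 1 := by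
    rw [← Nat.factorization_le_iff_dvd he0 hq1]
    rw [Finsupp.le_def]
    intro p
    by_cases hp : p.Prime
    · have hfp := factorization_prod_pow m hm0 (fun r => (q - 1).factorization r) p hp
      rw [hfp]
      by_cases hpm : p ∣ m
      · rw [if_pos hpm]
      · rw [if_neg hpm]
        omega
    · rw [Nat.factorization_eq_zero_of_not_prime _ hp]
      omega
  have htm : (q ^ l - 1) / m * m = q ^ l - 1 := Nat.div_mul_cancel hC2
  have ht0 : (q ^ l - 1) / m ≠ 0 := by
    intro h
    rw [h] at htm
    omega
  have htf : ∀ p, ((q ^ l - 1) / m).factorization p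
      = (q ^ l - 1).factorization p - m.factorization p := by
    intro p
    rw [Nat.factorization_div hC2]
    simp
  have hgcd0 : 0 < Nat.gcd (∏ p ∈ m.primeFactors, p ^ (q - 1).factorization p)
      ((q ^ l - 1) / m) := Nat.gcd_pos_of_pos_left _ (by omega)
  have hmain : Nat.gcd (∏ p ∈ m.primeFactors, p ^ (q - 1).factorization p)
      ((q ^ l - 1) / m) * (m / l)
      = ∏ p ∈ m.primeFactors, p ^ (q - 1).factorization p := by
    refine Nat.eq_of_factorization_eq (Nat.mul_ne_zero (by omega) hk0) he0 ?_
    intro p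
    by_cases hp : p.Prime
    · have hEf := factorization_prod_pow m hm0 (fun r => (q - 1).factorization r) p hp
      have hgf : (Nat.gcd (∏ p ∈ m.primeFactors, p ^ (q - 1).factorization p)
          ((q ^ l - 1) / m)).factorization p
          = min ((∏ p ∈ m.primeFactors, p ^ (q - 1).factorization p).factorization p)
            (((q ^ l - 1) / m).factorization p) := by
        rw [Nat.factorization_gcd he0 ht0, Finsupp.inf_apply]
      rw [Nat.factorization_mul (by omega) hk0, Finsupp.add_apply, hgf, hkf p, htf p, hEf]
      by_cases hpm : p ∣ m
      · rw [if_pos hpm]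
        have h3 := hexact p hp hpm
        have h4 := hD1 p hp hpm
        have h5 := hG2 p hp hpm
        have h6 := hvq1 p hp hpm
        have h7 := hvm1 p hp hpm
        omega
      · rw [if_neg hpm, Nat.factorization_eq_zero_of_not_dvd hpm]
        omega
    · rw [Nat.factorization_eq_zero_of_not_prime _ hp,
        Nat.factorization_eq_zero_of_not_prime _ hp]
  have hfinal : (∏ p ∈ m.primeFactors, p ^ (q - 1).factorization p) /
      Nat.gcd (∏ p ∈ m.primeFactors, p ^ (q - 1).factorization p) ((q ^ l - 1) / m)
      = m / l :=
    Nat.div_eq_of_eq_mul_left hgcd0 (hmain.symm.trans (Nat.mul_comm _ _))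
  exact ⟨hcop, hl0, hC2, hkdvd, hk2, hedvd, ht0, hfinal⟩



open Polynomial

/-- Theorem 4: there exist integers `r_0, …, r_{l-1}` such that the `k·l` elements
`a^{jt + r_i} θ^{ik+1} + b` (for `0 ≤ i ≤ l-1`, `0 ≤ j ≤ k-1`) are pairwise distinct
and all lie in the cyclic subgroup generated by `θ + b`. -/
theorem binomials_in_subgroup_pairwise_distinct
    (F : Type*) [Field F] [Fintype F] (q m : ℕ)
    (hq : Fintype.card F = q)
    (hodd : ∃ p n : ℕ, p.Prime ∧ Odd p ∧ q = p ^ n)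
    (hq5 : 5 ≤ q)
    (hm2 : 2 ≤ m)
    (hmndvd : ¬ m ∣ (q - 1))
    (hprime : ∀ p : ℕ, p.Prime → p ∣ m → p ∣ (q - 1))
    (h4 : 4 ∣ m → 4 ∣ (q - 1))
    (l k t : ℕ)
    (hl : l = orderOf ((q : ZMod m)))
    (hldvd : l ∣ m)
    (hk : k = m / l)
    (ht : t = (q ^ l - 1) / m)
    (a : F)
    (ha : orderOf a = ∏ p ∈ m.primeFactors, p ^ (q - 1).factorization p)
    (hirr : Irreducible (X ^ m - C a : Polynomial F))
    (b : F) (hb : b ≠ 0) :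
    ∃ r : Fin l → ℤ,
      Function.Injective (fun p : Fin l × Fin k =>
        AdjoinRoot.of (X ^ m - C a : Polynomial F)
            (a ^ (((p.2 : ℕ) : ℤ) * (t : ℤ) + r p.1)) *
          AdjoinRoot.root (X ^ m - C a : Polynomial F) ^ ((p.1 : ℕ) * k + 1) +
          AdjoinRoot.of (X ^ m - C a : Polynomial F) b) ∧
      ∀ p : Fin l × Fin k,
        (AdjoinRoot.of (X ^ m - C a : Polynomial F)
            (a ^ (((p.2 : ℕ) : ℤ) * (t : ℤ) + r p.1)) *
          AdjoinRoot.root (X ^ m - C a : Polynomial F) ^ ((p.1 : ℕ) * k + 1) +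
          AdjoinRoot.of (X ^ m - C a : Polynomial F) b)
          ∈ Submonoid.powers (AdjoinRoot.root (X ^ m - C a : Polynomial F)
            + AdjoinRoot.of (X ^ m - C a : Polynomial F) b) := by
  obtain ⟨hcop, hl0, hmdvdql, hkdvd, hk2, hedvd, ht0', hgcdk⟩ :=
    nt_all q m l hq5 hm2 hprime h4 hl hldvd
  subst hk
  subst ht
  have hm0 : 0 < m := by omega
  have hkl : m / l * l = m := Nat.div_mul_cancel hldvd
  have htmul : (q ^ l - 1) / m * m = q ^ l - 1 := Nat.div_mul_cancel hmdvdql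
  have hql1 : 1 ≤ q ^ l := Nat.one_le_pow _ _ (by omega)
  -- facts about a
  have hedvd' : orderOf a ∣ q - 1 := by rw [ha]; exact hedvd
  have he0 : orderOf a ≠ 0 := by rw [ha]; exact prod_pow_ne_zero m _
  have ha0 : a ≠ 0 := by
    intro h0
    have h1 := pow_orderOf_eq_one a
    rw [h0] at h1 he0
    rw [zero_pow he0] at h1
    exact zero_ne_one h1
  have hordat : orderOf (a ^ ((q ^ l - 1) / m)) = m / l := by
    rw [orderOf_pow' a ht0', ha]
    exact hgcdk
  have hpow_iff : ∀ (c : F), c ≠ 0 → ∀ x y : ℕ, c ^ x = c ^ y ↔ x ≡ y [MOD orderOf c] := by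
    intro c hc x y
    have hcoe : ((Units.mk0 c hc : Fˣ) : F) = c := rfl
    have hordu : orderOf (Units.mk0 c hc) = orderOf c := by rw [← orderOf_units, hcoe]
    rw [← hordu]
    constructor
    · intro h
      refine pow_eq_pow_iff_modEq.mp (Units.ext ?_)
      simpa [Units.val_pow_eq_pow_val, hcoe] using h
    · intro h
      have h2 := congrArg (Units.val) (pow_eq_pow_iff_modEq.mpr h)
      simpa [Units.val_pow_eq_pow_val, hcoe] using h2
  have hqe : q ≡ 1 [MOD orderOf a] := ((Nat.modEq_iff_dvd' (by omega)).mpr hedvd').symm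
  haveI : NeZero m := ⟨by omega⟩
  -- surjectivity of powers of q onto residues 1 + i*(m/l)
  have hsurj : ∀ i : Fin l, ∃ s : ℕ, q ^ s % m = 1 + (i : ℕ) * (m / l) := by
    have hex : ∀ s : Fin l, ∃ i : Fin l, q ^ (s : ℕ) % m = 1 + (i : ℕ) * (m / l) := by
      intro s
      have hq1k : q ≡ 1 [MOD m / l] := ((Nat.modEq_iff_dvd' (by omega)).mpr hkdvd).symm
      have h2 : q ^ (s : ℕ) ≡ 1 [MOD m / l] := by simpa using hq1k.pow (s : ℕ)
      have h3 : q ^ (s : ℕ) % m ≡ q ^ (s : ℕ) [MOD m / l] :=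
        (Nat.mod_modEq _ m).of_dvd (Nat.div_dvd_of_dvd hldvd)
      have h1 : q ^ (s : ℕ) % m ≡ 1 [MOD m / l] := h3.trans h2
      have h4 : q ^ (s : ℕ) % m ≠ 0 := by
        intro h0
        have hdv : m ∣ q ^ (s : ℕ) := Nat.dvd_of_mod_eq_zero h0
        have hc : Nat.Coprime m (q ^ (s : ℕ)) := (Nat.Coprime.pow_left _ hcop).symm
        have := Nat.Coprime.eq_one_of_dvd hc hdv
        omega
      have h5 : q ^ (s : ℕ) % m < m := Nat.mod_lt _ (by omega)
      have h6 : (m / l) ∣ (q ^ (s : ℕ) % m - 1) := (Nat.modEq_iff_dvd' (by omega)).mp h1.symm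
      obtain ⟨i, hi⟩ := h6
      have hilt : i < l := by
        by_contra hge
        push_neg at hge
        have hmul : m / l * l ≤ m / l * i := Nat.mul_le_mul_left _ hge
        omega
      refine ⟨⟨i, hilt⟩, ?_⟩
      show q ^ (s : ℕ) % m = 1 + i * (m / l)
      rw [Nat.mul_comm]
      omega
    choose g hg using hex
    have hginj : Function.Injective g := by
      intro s s' hss
      have h1 : q ^ (s : ℕ) % m = q ^ (s' : ℕ) % m := by rw [hg s, hg s', hss]
      have h2 : (q : ZMod m) ^ (s : ℕ) = (q : ZMod m) ^ (s' : ℕ) := by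
        rw [← Nat.cast_pow, ← Nat.cast_pow, ZMod.natCast_eq_natCast_iff']
        exact h1
      have hu : ∀ w : ℕ, (((ZMod.unitOfCoprime q hcop) ^ w : (ZMod m)ˣ) : ZMod m)
          = (q : ZMod m) ^ w := by
        intro w
        rw [Units.val_pow_eq_pow_val, ZMod.coe_unitOfCoprime]
      have h3 : (ZMod.unitOfCoprime q hcop) ^ (s : ℕ)
          = (ZMod.unitOfCoprime q hcop) ^ (s' : ℕ) :=
        Units.ext (by rw [hu, hu]; exact h2)
      have horder : orderOf (ZMod.unitOfCoprime q hcop) = l := by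
        rw [hl, ← orderOf_units, ZMod.coe_unitOfCoprime]
      have := pow_injOn_Iio_orderOf (x := ZMod.unitOfCoprime q hcop)
        (Set.mem_Iio.mpr (by rw [horder]; exact s.2))
        (Set.mem_Iio.mpr (by rw [horder]; exact s'.2)) h3
      exact Fin.ext this
    intro i
    obtain ⟨s, hs⟩ := (Finite.injective_iff_bijective.mp hginj).2 i
    exact ⟨(s : ℕ), by rw [hg s, hs]⟩
  choose sf hsf using hsurj
  -- divisibility for multiples of l
  have hdvd_jl : ∀ j : ℕ, m ∣ q ^ (j * l) - 1 := by
    intro j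
    refine hmdvdql.trans ?_
    have h := Nat.sub_dvd_pow_sub_pow (q ^ l) 1 j
    rw [← pow_mul, one_pow] at h
    rwa [mul_comm l j] at h
  -- algebra setup
  haveI : Fact (Irreducible (X ^ m - C a : Polynomial F)) := ⟨hirr⟩
  have hmonic : (X ^ m - C a : Polynomial F).Monic := monic_X_pow_sub_C a (by omega)
  have haev : (Polynomial.aeval (AdjoinRoot.root (X ^ m - C a : Polynomial F)))
      (X ^ m - C a : Polynomial F) = 0 := by
    rw [Polynomial.aeval_def, AdjoinRoot.algebraMap_eq]
    exact AdjoinRoot.eval₂_root _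
  have hminp : minpoly F (AdjoinRoot.root (X ^ m - C a : Polynomial F)) = X ^ m - C a :=
    (minpoly.eq_of_irreducible_of_monic hirr haev hmonic).symm
  have hrootm : (AdjoinRoot.root (X ^ m - C a : Polynomial F)) ^ m
      = AdjoinRoot.of (X ^ m - C a : Polynomial F) a := by
    have h := AdjoinRoot.eval₂_root (X ^ m - C a : Polynomial F)
    simp only [Polynomial.eval₂_sub, Polynomial.eval₂_pow, Polynomial.eval₂_X,
      Polynomial.eval₂_C] at h
    exact sub_eq_zero.mp h
  have hofinj : Function.Injective (AdjoinRoot.of (X ^ m - C a : Polynomial F)) :=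
    (AdjoinRoot.of (X ^ m - C a : Polynomial F)).injective
  have hroot0 : AdjoinRoot.root (X ^ m - C a : Polynomial F) ≠ 0 := by
    intro h0
    have h1 := hrootm
    rw [h0, zero_pow (by omega : m ≠ 0)] at h1
    exact ha0 (hofinj (by rw [← h1, map_zero])).symm
  -- characteristic and Frobenius
  obtain ⟨p, n, hp, hpo, hqpn⟩ := hodd
  haveI : Fact p.Prime := ⟨hp⟩
  have hring : ringChar F = p := by
    haveI := ringChar.charP F
    have h1 : (q : F) = 0 := by rw [← hq]; exact Nat.cast_card_eq_zero F
    have h2 : ringChar F ∣ q := (CharP.cast_eq_zero_iff F (ringChar F) q).mp h1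
    have h3 : (ringChar F).Prime := CharP.char_is_prime F (ringChar F)
    rw [hqpn] at h2
    have h4 : ringChar F ∣ p := h3.dvd_of_dvd_pow h2
    exact (Nat.prime_dvd_prime_iff_eq h3 hp).mp h4
  haveI hcharF : CharP F p := hring ▸ ringChar.charP F
  haveI hcharR : CharP (AdjoinRoot (X ^ m - C a : Polynomial F)) p :=
    charP_of_injective_ringHom hofinj p
  have hfrob : ∀ (x y : AdjoinRoot (X ^ m - C a : Polynomial F)) (s : ℕ),
      (x + y) ^ q ^ s = x ^ q ^ s + y ^ q ^ s := by
    intro x y s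
    rw [hqpn, ← pow_mul]
    exact add_pow_char_pow x y p (n * s)
  have hbfrob : ∀ (c : F) (s : ℕ),
      (AdjoinRoot.of (X ^ m - C a : Polynomial F) c) ^ q ^ s
      = AdjoinRoot.of (X ^ m - C a : Polynomial F) c := by
    intro c s
    rw [← map_pow]
    congr 1
    rw [← hq]
    exact FiniteField.pow_card_pow s c
  have hpow : ∀ s : ℕ,
      (AdjoinRoot.root (X ^ m - C a : Polynomial F)
        + AdjoinRoot.of (X ^ m - C a : Polynomial F) b) ^ q ^ s
      = AdjoinRoot.of (X ^ m - C a : Polynomial F) (a ^ (q ^ s / m)) *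
          AdjoinRoot.root (X ^ m - C a : Polynomial F) ^ (q ^ s % m)
        + AdjoinRoot.of (X ^ m - C a : Polynomial F) b := by
    intro s
    rw [hfrob, hbfrob]
    congr 1
    conv_lhs => rw [← Nat.div_add_mod (q ^ s) m]
    rw [pow_add, pow_mul, hrootm, ← map_pow]
  -- modular equalities for exponents
  have hTmod : ∀ j : ℕ, (q ^ (j * l) - 1) / m ≡ j * ((q ^ l - 1) / m) [MOD orderOf a] := by
    intro j
    induction j with
    | zero =>
      simp only [Nat.zero_mul, pow_zero, Nat.sub_self, Nat.zero_div]
      rfl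
    | succ j ih =>
      have hdj : m ∣ q ^ (j * l) - 1 := hdvd_jl j
      have hdj1 : m ∣ q ^ ((j + 1) * l) - 1 := hdvd_jl (j + 1)
      have hqjl1 : 1 ≤ q ^ (j * l) := Nat.one_le_pow _ _ (by omega)
      have hTj : (q ^ (j * l) - 1) / m * m = q ^ (j * l) - 1 := Nat.div_mul_cancel hdj
      have hstep : (q ^ ((j + 1) * l) - 1) / m
          = q ^ (j * l) * ((q ^ l - 1) / m) + (q ^ (j * l) - 1) / m := by
        apply Nat.eq_of_mul_eq_mul_right hm0
        rw [Nat.div_mul_cancel hdj1]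
        have hsplit : q ^ ((j + 1) * l) = q ^ (j * l) * q ^ l := by
          rw [← pow_add]
          congr 1
          ring
        rw [hsplit,
          Nat.add_mul (q ^ (j * l) * ((q ^ l - 1) / m)) ((q ^ (j * l) - 1) / m) m,
          Nat.mul_assoc, htmul, hTj, Nat.mul_sub]
        have hge : q ^ (j * l) ≤ q ^ (j * l) * q ^ l :=
          Nat.le_mul_of_pos_right _ (by omega)
        omega
      rw [hstep]
      have h1 : q ^ (j * l) ≡ 1 [MOD orderOf a] := by simpa using hqe.pow (j * l)
      have h2 := (h1.mul_right ((q ^ l - 1) / m)).add ih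
      have h3 : 1 * ((q ^ l - 1) / m) + j * ((q ^ l - 1) / m)
          = (j + 1) * ((q ^ l - 1) / m) := by ring
      rwa [h3] at h2
  have hsmod : ∀ (i : Fin l) (j : ℕ),
      q ^ (sf i + j * l) / m
        ≡ j * ((q ^ l - 1) / m) + q ^ sf i / m [MOD orderOf a] := by
    intro i j
    have hdj : m ∣ q ^ (j * l) - 1 := hdvd_jl j
    have hqjl1 : 1 ≤ q ^ (j * l) := Nat.one_le_pow _ _ (by omega)
    have hfloor : q ^ (sf i + j * l) / m
        = q ^ sf i / m + q ^ sf i * ((q ^ (j * l) - 1) / m) := by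
      have hids : q ^ (sf i + j * l)
          = q ^ sf i + m * (q ^ sf i * ((q ^ (j * l) - 1) / m)) := by
        have h2 : m * (q ^ sf i * ((q ^ (j * l) - 1) / m)) = q ^ sf i * (q ^ (j * l) - 1) := by
          rw [show m * (q ^ sf i * ((q ^ (j * l) - 1) / m))
            = q ^ sf i * (((q ^ (j * l) - 1) / m) * m) by ring, Nat.div_mul_cancel hdj]
        rw [pow_add, h2, Nat.mul_sub, Nat.mul_one]
        have hge : q ^ sf i ≤ q ^ sf i * q ^ (j * l) :=
          Nat.le_mul_of_pos_right _ (by omega)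
        omega
      rw [hids, Nat.add_mul_div_left _ _ hm0]
    rw [hfloor]
    have h1 := (hqe.pow (sf i)).mul (hTmod j)
    rw [one_pow, one_mul] at h1
    simpa [Nat.add_comm] using h1.add_left (q ^ sf i / m)
  have hmod_m : ∀ (i : Fin l) (j : ℕ),
      q ^ (sf i + j * l) % m = 1 + (i : ℕ) * (m / l) := by
    intro i j
    have h1 : q ^ (j * l) ≡ 1 [MOD m] :=
      ((Nat.modEq_iff_dvd' (Nat.one_le_pow _ _ (by omega))).mpr (hdvd_jl j)).symm
    have h2 : q ^ (sf i + j * l) ≡ q ^ sf i [MOD m] := by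
      rw [pow_add]
      simpa using (Nat.ModEq.refl (q ^ sf i)).mul h1
    rw [← hsf i]
    exact h2
  -- the element identity
  have hElem : ∀ (i : Fin l) (j : ℕ),
      AdjoinRoot.of (X ^ m - C a : Polynomial F)
          (a ^ (j * ((q ^ l - 1) / m) + q ^ sf i / m)) *
        AdjoinRoot.root (X ^ m - C a : Polynomial F) ^ ((i : ℕ) * (m / l) + 1) +
        AdjoinRoot.of (X ^ m - C a : Polynomial F) b
      = (AdjoinRoot.root (X ^ m - C a : Polynomial F)
          + AdjoinRoot.of (X ^ m - C a : Polynomial F) b) ^ q ^ (sf i + j * l) := by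
    intro i j
    rw [hpow (sf i + j * l), hmod_m i j]
    have e1 : a ^ (j * ((q ^ l - 1) / m) + q ^ sf i / m) = a ^ (q ^ (sf i + j * l) / m) :=
      (hpow_iff a ha0 _ _).mpr (hsmod i j).symm
    rw [e1, Nat.add_comm 1 ((i : ℕ) * (m / l))]
  -- basic linear independence lemma
  have hbasic : ∀ (c c' : F), c ≠ 0 → c' ≠ 0 → ∀ (d d' : ℕ), d < m → d' < m →
      AdjoinRoot.of (X ^ m - C a : Polynomial F) c *
        AdjoinRoot.root (X ^ m - C a : Polynomial F) ^ d =
      AdjoinRoot.of (X ^ m - C a : Polynomial F) c' *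
        AdjoinRoot.root (X ^ m - C a : Polynomial F) ^ d' →
      d = d' ∧ c = c' := by
    have haux : ∀ (c c' : F), c' ≠ 0 → ∀ (d d' : ℕ), d < d' → d' < m →
        AdjoinRoot.of (X ^ m - C a : Polynomial F) c *
          AdjoinRoot.root (X ^ m - C a : Polynomial F) ^ d =
        AdjoinRoot.of (X ^ m - C a : Polynomial F) c' *
          AdjoinRoot.root (X ^ m - C a : Polynomial F) ^ d' → False := by
      intro c c' hc' d d' hdd' hd'm heq
      have hw : AdjoinRoot.of (X ^ m - C a : Polynomial F) c
          = AdjoinRoot.of (X ^ m - C a : Polynomial F) c' *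
              AdjoinRoot.root (X ^ m - C a : Polynomial F) ^ (d' - d) := by
        have h1 : AdjoinRoot.root (X ^ m - C a : Polynomial F) ^ d'
            = AdjoinRoot.root (X ^ m - C a : Polynomial F) ^ (d' - d) *
                AdjoinRoot.root (X ^ m - C a : Polynomial F) ^ d := by
          rw [← pow_add]
          congr 1
          omega
        rw [h1, ← mul_assoc] at heq
        exact mul_right_cancel₀ (pow_ne_zero _ hroot0) heq
      have hPne : (C c' * X ^ (d' - d) - C c : Polynomial F) ≠ 0 := by
        intro h0
        have hcoeff := congrArg (fun Q => Polynomial.coeff Q (d' - d)) h0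
        simp [Polynomial.coeff_C] at hcoeff
        rw [if_neg (show ¬ (d' - d = 0) by omega), sub_zero] at hcoeff
        exact hc' hcoeff
      have haeval : Polynomial.aeval (AdjoinRoot.root (X ^ m - C a : Polynomial F))
          (C c' * X ^ (d' - d) - C c : Polynomial F) = 0 := by
        rw [map_sub, map_mul, Polynomial.aeval_C, map_pow, Polynomial.aeval_X,
          Polynomial.aeval_C, AdjoinRoot.algebraMap_eq, sub_eq_zero]
        exact hw.symm
      have hdvd := minpoly.dvd F (AdjoinRoot.root (X ^ m - C a : Polynomial F)) haeval
      rw [hminp] at hdvd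
      have hdeg := Polynomial.natDegree_le_of_dvd hdvd hPne
      rw [Polynomial.natDegree_X_pow_sub_C] at hdeg
      have hdegP : (C c' * X ^ (d' - d) - C c : Polynomial F).natDegree ≤ d' - d := by
        have h1 : (C c' * X ^ (d' - d) : Polynomial F).natDegree = d' - d :=
          Polynomial.natDegree_C_mul_X_pow _ _ hc'
        calc (C c' * X ^ (d' - d) - C c : Polynomial F).natDegree
            ≤ max (C c' * X ^ (d' - d) : Polynomial F).natDegree
              (C c : Polynomial F).natDegree := Polynomial.natDegree_sub_le _ _
        _ ≤ d' - d := by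
            rw [h1]
            simp
      omega
    intro c c' hc hc' d d' hdm hd'm heq
    rcases lt_trichotomy d d' with h | h | h
    · exact (haux c c' hc' d d' h hd'm heq).elim
    · subst h
      refine ⟨rfl, ?_⟩
      have hcc := mul_right_cancel₀ (pow_ne_zero d hroot0) heq
      exact hofinj hcc
    · exact (haux c' c hc d' d h hdm heq.symm).elim
  have hbound : ∀ i : Fin l, (i : ℕ) * (m / l) + 1 < m := by
    intro i
    have h1 : (i : ℕ) ≤ l - 1 := by have := i.2; omega
    have h2 : (i : ℕ) * (m / l) ≤ (l - 1) * (m / l) := Nat.mul_le_mul_right _ h1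
    have h3 : (l - 1) * (m / l) + 1 * (m / l) = l * (m / l) := by
      rw [← Nat.add_mul]
      congr 1
      omega
    rw [one_mul, Nat.mul_comm l (m / l), hkl] at h3
    omega
  -- conclusion
  refine ⟨fun i => ((q ^ sf i / m : ℕ) : ℤ), ?_, ?_⟩
  · intro P P' hPP
    obtain ⟨i, j⟩ := P
    obtain ⟨i', j'⟩ := P'
    simp only [] at hPP
    have hz : ∀ (i0 : Fin l) (j0 : Fin (m / l)),
        a ^ (((j0 : ℕ) : ℤ) * (((q ^ l - 1) / m : ℕ) : ℤ) + ((q ^ sf i0 / m : ℕ) : ℤ))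
        = a ^ ((j0 : ℕ) * ((q ^ l - 1) / m) + q ^ sf i0 / m) := by
      intro i0 j0
      have hcast : (((j0 : ℕ) : ℤ) * (((q ^ l - 1) / m : ℕ) : ℤ) + ((q ^ sf i0 / m : ℕ) : ℤ))
          = (((j0 : ℕ) * ((q ^ l - 1) / m) + q ^ sf i0 / m : ℕ) : ℤ) := by
        push_cast
        ring
      rw [hcast, zpow_natCast]
    rw [hz i j, hz i' j'] at hPP
    have h1 := add_right_cancel hPP
    have hkey := hbasic _ _ (pow_ne_zero _ ha0) (pow_ne_zero _ ha0) _ _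
      (hbound i) (hbound i') h1
    obtain ⟨hd, hc⟩ := hkey
    have hii : i = i' := by
      refine Fin.ext ?_
      refine Nat.eq_of_mul_eq_mul_right (show 0 < m / l by omega) ?_
      omega
    subst hii
    have h2 := (hpow_iff a ha0 _ _).mp hc
    have h3 : (j : ℕ) * ((q ^ l - 1) / m) ≡ (j' : ℕ) * ((q ^ l - 1) / m) [MOD orderOf a] :=
      Nat.ModEq.add_right_cancel' _ h2
    have h4 : (a ^ ((q ^ l - 1) / m)) ^ (j : ℕ) = (a ^ ((q ^ l - 1) / m)) ^ (j' : ℕ) := by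
      rw [← pow_mul, ← pow_mul]
      refine (hpow_iff a ha0 _ _).mpr ?_
      rw [Nat.mul_comm ((q ^ l - 1) / m) (j : ℕ), Nat.mul_comm ((q ^ l - 1) / m) (j' : ℕ)]
      exact h3
    have h5 := (hpow_iff _ (pow_ne_zero _ ha0) _ _).mp h4
    rw [hordat] at h5
    have h6 : (j : ℕ) = (j' : ℕ) := by
      have hj := j.2
      have hj' := j'.2
      have := h5
      unfold Nat.ModEq at this
      rwa [Nat.mod_eq_of_lt hj, Nat.mod_eq_of_lt hj'] at this
    exact Prod.ext rfl (Fin.ext h6)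
  · intro P
    obtain ⟨i, j⟩ := P
    simp only []
    have hcast : (((j : ℕ) : ℤ) * (((q ^ l - 1) / m : ℕ) : ℤ) + ((q ^ sf i / m : ℕ) : ℤ))
        = (((j : ℕ) * ((q ^ l - 1) / m) + q ^ sf i / m : ℕ) : ℤ) := by
      push_cast
      ring
    rw [hcast, zpow_natCast, hElem i (j : ℕ)]
    exact Submonoid.pow_mem _ (Submonoid.mem_powers _) _
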